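/- Let ψ : ℝ → ℝ be continuous, nonnegative, compactly supported in (0,∞), with ∫₀^∞ ψ(t) dt = 1. Let λ ∈ ℝ and ζ ∈ ℂ with Re ζ ≥ 0. If |∫₀^∞ e^{−t(ζ + iλ)} ψ(t) dt| = 1, then ζ = −iλ. -/

import Mathlib

open MeasureTheory Complex Set

/-- Let `ψ : ℝ → ℝ` be continuous, nonnegative, compactly supported in
`(0,∞)`, with `∫₀^∞ ψ(t) dt = 1`.  Let `λ ∈ ℝ` and `ζ ∈ ℂ` with `Re ζ ≥ 0`.
If `|∫₀^∞ e^{−t(ζ + iλ)} ψ(t) dt| = 1`, then `ζ = −iλ`. -/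
theorem zeta_eq_neg_I_lam_of_abs_laplace_eq_one
    (ψ : ℝ → ℝ) (hcont : Continuous ψ) (hnonneg : ∀ t, 0 ≤ ψ t)
    (hsupp : HasCompactSupport ψ) (hsupp' : tsupport ψ ⊆ Set.Ioi (0 : ℝ))
    (hint : ∫ t in Set.Ioi (0 : ℝ), ψ t = 1)
    (lam : ℝ) (ζ : ℂ) (hζ : 0 ≤ ζ.re)
    (h : ‖∫ t in Set.Ioi (0 : ℝ),
        Complex.exp (-(t : ℂ) * (ζ + (lam : ℂ) * Complex.I)) * (ψ t : ℂ)‖ = 1) :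
    ζ = -(lam : ℂ) * Complex.I := by
  set w : ℂ := ζ + (lam : ℂ) * Complex.I with hw
  have hwre : w.re = ζ.re := by simp [hw]
  set K : ℝ → ℂ := fun t => Complex.exp (-(t : ℂ) * w) * (ψ t : ℂ) with hK
  have hψ0 : ∀ t, t ∉ Set.Ioi (0 : ℝ) → ψ t = 0 := fun t ht =>
    image_eq_zero_of_notMem_tsupport (fun hmem => ht (hsupp' hmem))
  have hK0 : ∀ t, ψ t = 0 → K t = 0 := by intro t ht; simp [hK, ht]
  have hKcont : Continuous K := by
    apply Continuous.mul
    · exact Complex.continuous_exp.comp (by continuity)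
    · exact Complex.continuous_ofReal.comp hcont
  have hKsupp : HasCompactSupport K := by
    apply hsupp.mono
    intro t ht hψt
    exact ht (hK0 t hψt)
  have hKint : Integrable K := hKcont.integrable_of_hasCompactSupport hKsupp
  have hψint : Integrable ψ := hcont.integrable_of_hasCompactSupport hsupp
  set F : ℂ := ∫ t in Set.Ioi (0 : ℝ), K t with hF
  have hcF : (starRingEnd ℂ) F * F = 1 := by
    rw [mul_comm, Complex.mul_conj, ← Complex.sq_norm, show ‖F‖ = 1 from h]
    norm_num
  set c : ℂ := (starRingEnd ℂ) F with hc
  have hgK : ∀ t, (c * K t).re = (c * Complex.exp (-(t : ℂ) * w)).re * ψ t := by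
    intro t
    rw [hK, ← mul_assoc, Complex.mul_re]
    simp
  have hcKre : Integrable (fun t => (c * K t).re) (volume.restrict (Set.Ioi (0:ℝ))) :=
    ((hKint.restrict).const_mul c).re
  have hre1 : ∫ t in Set.Ioi (0 : ℝ), (c * K t).re = 1 := by
    have h1 := integral_re (μ := volume.restrict (Set.Ioi (0:ℝ))) ((hKint.restrict).const_mul c)
    simp only [RCLike.re_to_complex] at h1
    rw [h1, integral_const_mul, ← hF, hcF]
    simp
  set g : ℝ → ℝ := fun t => ψ t - (c * K t).re with hg
  have habsc : ‖c‖ = 1 := by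
    have h2 : ‖c‖ * ‖F‖ = 1 := by rw [← norm_mul, hcF, norm_one]
    rw [show ‖F‖ = 1 from h, mul_one] at h2
    exact h2
  have habse : ∀ t : ℝ, ‖c * Complex.exp (-(t : ℂ) * w)‖ =
      Real.exp (-(t * w.re)) := by
    intro t
    rw [norm_mul, habsc, one_mul, Complex.norm_exp]
    congr 1
    simp [Complex.mul_re]
  have hbound : ∀ t : ℝ, 0 ≤ t → (c * Complex.exp (-(t : ℂ) * w)).re ≤ 1 := by
    intro t ht
    calc (c * Complex.exp (-(t : ℂ) * w)).re ≤ ‖c * Complex.exp (-(t : ℂ) * w)‖ :=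
          Complex.re_le_norm _
      _ = Real.exp (-(t * w.re)) := habse t
      _ ≤ 1 := by
          rw [Real.exp_le_one_iff]
          have : 0 ≤ t * w.re := mul_nonneg ht (hwre ▸ hζ)
          linarith
  have hgnonneg : ∀ t, 0 ≤ g t := by
    intro t
    rcases le_or_gt t 0 with ht | ht
    · have hψt : ψ t = 0 := hψ0 t (by simpa using ht)
      simp [hg, hK0 t hψt, hψt]
    · have h1 := hbound t ht.le
      have h2 := hnonneg t
      rw [hg]
      simp only [hgK t]
      nlinarith
  have hgcont : Continuous g :=
    hcont.sub (Complex.continuous_re.comp (continuous_const.mul hKcont))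
  have hgsupp : HasCompactSupport g := by
    apply hsupp.mono
    intro t ht hψt
    refine ht ?_
    simp [hg, hK0 t hψt, hψt]
  have hgint : Integrable g := hgcont.integrable_of_hasCompactSupport hgsupp
  have hgIoi : ∫ t in Set.Ioi (0 : ℝ), g t = 0 := by
    rw [hg]
    rw [integral_sub (hψint.restrict) hcKre, hint, hre1]
    ring
  have hgzero : ∀ t, g t = 0 := by
    have hfull : ∫ t, g t = 0 := by
      rw [← setIntegral_eq_integral_of_forall_compl_eq_zero (s := Set.Ioi (0:ℝ))
        (fun t ht => ?_), hgIoi]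
      have hψt : ψ t = 0 := hψ0 t ht
      simp [hg, hK0 t hψt, hψt]
    have hae := (integral_eq_zero_iff_of_nonneg hgnonneg hgint).mp hfull
    intro t
    have heq := (hgcont.ae_eq_iff_eq (μ := volume) continuous_const).mp hae
    exact congrFun heq t
  have hkey : ∀ t, 0 < ψ t → c * Complex.exp (-(t : ℂ) * w) = 1 := by
    intro t ht
    have htpos : (0:ℝ) < t :=
      hsupp' (subset_tsupport ψ (by simp [Function.mem_support, ne_of_gt ht]))
    have hz := hgzero t
    rw [hg] at hz
    simp only [hgK t] at hz
    have h0 : (c * Complex.exp (-(t : ℂ) * w)).re = 1 := by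
      have hne : ψ t ≠ 0 := ne_of_gt ht
      have h1 : (c * Complex.exp (-(t : ℂ) * w)).re * ψ t = 1 * ψ t := by linarith
      exact mul_right_cancel₀ hne h1
    have habs : ‖c * Complex.exp (-(t : ℂ) * w)‖ ≤ 1 := by
      rw [habse t, Real.exp_le_one_iff]
      have : 0 ≤ t * w.re := mul_nonneg htpos.le (hwre ▸ hζ)
      linarith
    set z := c * Complex.exp (-(t : ℂ) * w) with hzdef
    have him : z.im = 0 := by
      have h1 : z.re ≤ ‖z‖ := Complex.re_le_norm z
      have h2 : ‖z‖ = 1 := le_antisymm habs (by rw [← h0]; exact Complex.re_le_norm z)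
      have h3 := Complex.sq_norm z
      rw [h2, Complex.normSq_apply, h0] at h3
      nlinarith
    exact Complex.ext (by rw [h0]; rfl) (by rw [him]; rfl)
  obtain ⟨t₀, ht₀⟩ : ∃ t, 0 < ψ t := by
    by_contra hcon
    push_neg at hcon
    have hall : ∀ t, ψ t = 0 := fun t => le_antisymm (hcon t) (hnonneg t)
    rw [show (fun t => ψ t) = fun _ => (0:ℝ) from funext hall] at hint
    simp at hint
  have ht₀pos : (0:ℝ) < t₀ :=
    hsupp' (subset_tsupport ψ (by simp [Function.mem_support, ne_of_gt ht₀]))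
  have hwre0 : w.re = 0 := by
    have h1 := hkey t₀ ht₀
    have h2 : ‖c * Complex.exp (-(t₀ : ℂ) * w)‖ = 1 := by rw [h1]; simp
    rw [habse t₀] at h2
    have h3 : -(t₀ * w.re) = 0 := by rw [Real.exp_eq_one_iff] at h2; exact h2
    rcases mul_eq_zero.mp (by linarith : t₀ * w.re = 0) with h4 | h4
    · exact absurd h4 (ne_of_gt ht₀pos)
    · exact h4
  have hopen : IsOpen {t : ℝ | 0 < ψ t} := isOpen_lt continuous_const hcont
  obtain ⟨ε, hε, hball⟩ := Metric.isOpen_iff.mp hopen t₀ ht₀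
  have hwim0 : w.im = 0 := by
    by_contra hμ
    set μ := w.im with hμdef
    set δ : ℝ := min (ε / 2) (Real.pi / |μ|) with hδ
    have hpipos : 0 < Real.pi / |μ| := div_pos Real.pi_pos (abs_pos.mpr hμ)
    have hδpos : 0 < δ := lt_min (by linarith) hpipos
    have hmem : t₀ + δ ∈ Metric.ball t₀ ε := by
      simp only [Metric.mem_ball, Real.dist_eq, add_sub_cancel_left, abs_of_pos hδpos]
      calc δ ≤ ε / 2 := min_le_left _ _
        _ < ε := by linarith
    have hψδ : 0 < ψ (t₀ + δ) := hball hmem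
    have e1 := hkey t₀ ht₀
    have e2 := hkey (t₀ + δ) hψδ
    have hcne : c ≠ 0 := by
      intro h0; rw [h0, zero_mul] at e1; exact one_ne_zero e1.symm
    have hee : Complex.exp (-(↑(t₀ + δ) : ℂ) * w) = Complex.exp (-(t₀ : ℂ) * w) :=
      mul_left_cancel₀ hcne (e2.trans e1.symm)
    have hq : Complex.exp (-(δ : ℂ) * w) = 1 := by
      have hsplit : Complex.exp (-(↑(t₀ + δ):ℂ) * w)
          = Complex.exp (-(t₀:ℂ) * w) * Complex.exp (-(δ:ℂ) * w) := by
        rw [← Complex.exp_add]; congr 1; push_cast; ring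
      rw [hsplit] at hee
      have hexpne : Complex.exp (-(t₀:ℂ) * w) ≠ 0 := Complex.exp_ne_zero _
      calc Complex.exp (-(δ : ℂ) * w)
          = (Complex.exp (-(t₀:ℂ) * w))⁻¹ * (Complex.exp (-(t₀:ℂ) * w) * Complex.exp (-(δ:ℂ) * w)) := by
            field_simp
        _ = 1 := by rw [hee]; field_simp
    rw [Complex.exp_eq_one_iff] at hq
    obtain ⟨n, hn⟩ := hq
    have hnim : -(δ * μ) = n * (2 * Real.pi) := by
      have := congrArg Complex.im hn
      simpa [Complex.mul_im, hwre0, ← hμdef] using this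
    have hδμ : |δ * μ| ≤ Real.pi := by
      rw [abs_mul, abs_of_pos hδpos]
      have hle : δ ≤ Real.pi / |μ| := min_le_right _ _
      calc δ * |μ| ≤ (Real.pi / |μ|) * |μ| :=
            mul_le_mul_of_nonneg_right hle (abs_nonneg _)
        _ = Real.pi := by field_simp
    have hδμne : δ * μ ≠ 0 := mul_ne_zero (ne_of_gt hδpos) hμ
    have hnne : n ≠ 0 := by
      intro h0
      rw [h0] at hnim
      push_cast at hnim
      exact hδμne (by linarith)
    have habsn : (1:ℝ) ≤ |(n:ℝ)| := by
      have h1 : (1:ℤ) ≤ |n| := Int.one_le_abs hnne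
      calc (1:ℝ) = ((1:ℤ):ℝ) := by norm_num
        _ ≤ ((|n|:ℤ):ℝ) := by exact_mod_cast h1
        _ = |(n:ℝ)| := by push_cast; ring
    have hfin : |δ * μ| = |(n:ℝ)| * (2 * Real.pi) := by
      rw [show δ * μ = -(-(δ * μ)) by ring, abs_neg, hnim, abs_mul,
        abs_of_pos (by positivity : (0:ℝ) < 2 * Real.pi)]
    nlinarith [Real.pi_pos]
  have hw0 : w = 0 := Complex.ext hwre0 hwim0
  have hfin : ζ = -((lam:ℂ) * Complex.I) := by linear_combination hw0 - hw
  rw [hfin]; ring
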